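/- Let m be a finite type and let W be a positive semidefinite complex matrix indexed by Fin 3 ⊕ m, written in blocks W₀₀ (indexed Fin 3 × Fin 3), W₀₁ (indexed Fin 3 × m), W₁₀ = W₀₁ᴴ, and W₁₁ (indexed m × m). Suppose W₀₀ a b = v a * conj (v b) for all a, b ∈ Fin 3, where v : Fin 3 → ℂ is a nonzero vector. Then there exist a unique vector V̂ : m → ℂ and a unique positive semidefinite matrix Q : Matrix m m ℂ such that W₀₁ a k = v a * conj (V̂ k) for all a ∈ Fin 3, k ∈ m, and W₁₁ k l = V̂ k * conj (V̂ l) + Q k l for all k, l ∈ m. (This is the existence-and-uniqueness part of Lemma 2, describing the structure of any PSD matrix whose top-left block is the fixed rank-1 slack-bus block v_ref v_refᴴ.) -/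

import Mathlib

open Matrix
open scoped ComplexOrder

/-- **Lemma 2 (existence and uniqueness part).** Any PSD matrix `W` indexed by
`Fin 3 ⊕ m` whose top-left block is the fixed rank-1 slack-bus block
`v vᴴ` (with `v ≠ 0`) admits a unique vector `V̂ : m → ℂ` and a unique PSD
matrix `Q` such that `W₀₁ = v V̂ᴴ` and `W₁₁ = V̂ V̂ᴴ + Q`. -/
theorem psd_slack_block_structure
    {m : Type*} [Fintype m] [DecidableEq m]
    (W : Matrix (Fin 3 ⊕ m) (Fin 3 ⊕ m) ℂ) (hW : W.PosSemidef)
    (v : Fin 3 → ℂ) (hv : v ≠ 0)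
    (hW00 : ∀ a b : Fin 3, W (Sum.inl a) (Sum.inl b) = v a * starRingEnd ℂ (v b)) :
    ∃! p : (m → ℂ) × Matrix m m ℂ,
      p.2.PosSemidef ∧
      (∀ (a : Fin 3) (k : m),
        W (Sum.inl a) (Sum.inr k) = v a * starRingEnd ℂ (p.1 k)) ∧
      (∀ k l : m,
        W (Sum.inr k) (Sum.inr l) = p.1 k * starRingEnd ℂ (p.1 l) + p.2 k l) := by
  classical
  obtain ⟨a₀, ha₀⟩ : ∃ a, v a ≠ 0 := by
    by_contra h; push_neg at h; exact hv (funext h)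
  have hva₀ : (starRingEnd ℂ) (v a₀) ≠ 0 := by
    simpa using ha₀
  set Vh : m → ℂ := fun k => W (Sum.inr k) (Sum.inl a₀) / starRingEnd ℂ (v a₀) with hVh
  -- vectors orthogonal to v (in the top block) are annihilated by W
  have hker : ∀ x : Fin 3 → ℂ, (∑ b, starRingEnd ℂ (v b) * x b) = 0 →
      W *ᵥ (Sum.elim x 0) = 0 := by
    intro x hx
    rw [← hW.dotProduct_mulVec_zero_iff]
    have h1 : ∀ a, (∑ b, W (Sum.inl a) (Sum.inl b) * x b)
        = v a * ∑ b, starRingEnd ℂ (v b) * x b := by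
      intro a
      rw [Finset.mul_sum]
      exact Finset.sum_congr rfl fun b _ => by rw [hW00]; ring
    have expand : star (Sum.elim x (0 : m → ℂ)) ⬝ᵥ W *ᵥ Sum.elim x 0
        = ∑ a, starRingEnd ℂ (x a) * (v a * ∑ b, starRingEnd ℂ (v b) * x b) := by
      simp only [dotProduct, mulVec, dotProduct, Fintype.sum_sum_type, Sum.elim_inl,
        Sum.elim_inr, Pi.star_apply, Pi.zero_apply, mul_zero, Finset.sum_const_zero,
        add_zero, star_zero, zero_mul]
      exact Finset.sum_congr rfl fun a _ => by rw [h1]; rfl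
    rw [expand, hx]
    simp
  -- bottom-left block is rank-one
  have h10 : ∀ (k : m) (b : Fin 3),
      W (Sum.inr k) (Sum.inl b) = Vh k * starRingEnd ℂ (v b) := by
    intro k b
    set x : Fin 3 → ℂ := fun c =>
      starRingEnd ℂ (v a₀) * (if c = b then 1 else 0)
        - starRingEnd ℂ (v b) * (if c = a₀ then 1 else 0) with hxdef
    have hx : (∑ c, starRingEnd ℂ (v c) * x c) = 0 := by
      simp only [hxdef, mul_sub, mul_ite, mul_one, mul_zero, Finset.sum_sub_distrib,
        Finset.sum_ite_eq', Finset.mem_univ, if_true]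
      ring
    have h0 := congrFun (hker x hx) (Sum.inr k)
    have h0' : (∑ c, W (Sum.inr k) (Sum.inl c) * x c) = 0 := by
      simpa [mulVec, dotProduct, Fintype.sum_sum_type] using h0
    have h0'' : W (Sum.inr k) (Sum.inl b) * starRingEnd ℂ (v a₀)
        = W (Sum.inr k) (Sum.inl a₀) * starRingEnd ℂ (v b) := by
      have := h0'
      simp only [hxdef, mul_sub, mul_ite, mul_one, mul_zero, Finset.sum_sub_distrib,
        Finset.sum_ite_eq', Finset.mem_univ, if_true] at this
      linear_combination this
    rw [hVh]
    field_simp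
    linear_combination h0''
  -- top-right block is rank-one
  have h01 : ∀ (a : Fin 3) (k : m),
      W (Sum.inl a) (Sum.inr k) = v a * starRingEnd ℂ (Vh k) := by
    intro a k
    have := hW.1.apply (Sum.inl a) (Sum.inr k)
    rw [← this, h10]
    simp [mul_comm]
  -- the norm-squared of v
  set n : ℂ := ∑ b, starRingEnd ℂ (v b) * v b with hn_def
  have hn : n ≠ 0 := by
    have h1 : n = ((∑ b, Complex.normSq (v b) : ℝ) : ℂ) := by
      rw [hn_def]
      push_cast
      exact Finset.sum_congr rfl fun b _ => by
        rw [← Complex.mul_conj (v b)]; ring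
    have h2 : (0:ℝ) < ∑ b, Complex.normSq (v b) :=
      Finset.sum_pos' (fun i _ => Complex.normSq_nonneg _)
        ⟨a₀, Finset.mem_univ _, Complex.normSq_pos.mpr ha₀⟩
    rw [h1]
    exact_mod_cast h2.ne'
  -- the Schur-complement-like matrix Q
  set Q : Matrix m m ℂ :=
    Matrix.of fun k l => W (Sum.inr k) (Sum.inr l) - Vh k * starRingEnd ℂ (Vh l) with hQdef
  set P : Matrix (Fin 3 ⊕ m) m ℂ :=
    Matrix.of fun r l => Sum.elim
      (fun a => (-(starRingEnd ℂ (Vh l)) / n) * v a)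
      (fun j => if j = l then (1:ℂ) else 0) r with hPdef
  have hA : ∀ a, (∑ b, W (Sum.inl a) (Sum.inl b) * v b) = v a * n := by
    intro a
    rw [hn_def, Finset.mul_sum]
    exact Finset.sum_congr rfl fun b _ => by rw [hW00]; ring
  have hB : ∀ k, (∑ b, W (Sum.inr k) (Sum.inl b) * v b) = Vh k * n := by
    intro k
    rw [hn_def, Finset.mul_sum]
    exact Finset.sum_congr rfl fun b _ => by rw [h10]; ring
  have hWP : ∀ r l, (W * P) r l
      = Sum.elim (fun _ : Fin 3 => (0:ℂ)) (fun k => Q k l) r := by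
    intro r l
    have hsplit : (W * P) r l
        = (-(starRingEnd ℂ (Vh l)) / n) * (∑ b, W r (Sum.inl b) * v b)
          + W r (Sum.inr l) := by
      rw [Matrix.mul_apply, Fintype.sum_sum_type]
      simp only [hPdef, Matrix.of_apply, Sum.elim_inl, Sum.elim_inr, mul_ite, mul_one,
        mul_zero, Finset.sum_ite_eq', Finset.mem_univ, if_true, Finset.mul_sum]
      congr 1
      exact Finset.sum_congr rfl fun b _ => by ring
    cases r with
    | inl a =>
      rw [hsplit, hA, h01, Sum.elim_inl]
      field_simp
      ring
    | inr k =>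
      rw [hsplit, hB]
      simp only [Sum.elim_inr, hQdef, Matrix.of_apply]
      field_simp
      ring
  have hQ : Q = Pᴴ * W * P := by
    ext k l
    rw [Matrix.mul_assoc, Matrix.mul_apply, Fintype.sum_sum_type]
    simp only [hWP]
    simp only [Matrix.conjTranspose_apply, hWP, Sum.elim_inl, Sum.elim_inr, mul_zero,
      Finset.sum_const_zero, zero_add, hPdef, Matrix.of_apply, apply_ite star, star_one,
      star_zero, ite_mul, one_mul, zero_mul, Finset.sum_ite_eq', Finset.mem_univ, if_true]
  have hQpsd : Q.PosSemidef := by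
    rw [hQ]; exact hW.conjTranspose_mul_mul_same P
  refine ⟨(Vh, Q), ⟨hQpsd, h01, fun k l => by
    simp only [hQdef, Matrix.of_apply]; ring⟩, ?_⟩
  rintro ⟨V', Q'⟩ ⟨hQ', h2, h3⟩
  have hV : V' = Vh := by
    funext k
    have e1 : v a₀ * starRingEnd ℂ (V' k) = v a₀ * starRingEnd ℂ (Vh k) := by
      rw [← h2 a₀ k, h01]
    have e2 : starRingEnd ℂ (V' k) = starRingEnd ℂ (Vh k) := mul_left_cancel₀ ha₀ e1
    exact star_injective e2
  have hQe : Q' = Q := by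
    ext k l
    have := h3 k l
    rw [hV] at this
    simp only [hQdef, Matrix.of_apply]
    linear_combination -this
  simp [hV, hQe]
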